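/- The stationary covariance function of the nested OU process, C(τ) = (1/2)(κ²ν²/(η(κ²-η²))) e^{-η|τ|} + (1/2)(σ²/κ − κν²/(κ²-η²)) e^{-κ|τ|} with κ > η > 0, σ, ν > 0, is a positive semidefinite function on ℝ; in particular the variance C(0) = (1/2)(κ²ν²/(η(κ²-η²))) + (1/2)(σ²/κ − κν²/(κ²-η²)) is positive. -/

import Mathlib

open Real MeasureTheory Set

/-- The stationary covariance function of the nested OU process. -/
noncomputable def Ccov (κ η σ ν : ℝ) (τ : ℝ) : ℝ :=
  1 / 2 * (κ ^ 2 * ν ^ 2 / (η * (κ ^ 2 - η ^ 2))) * Real.exp (-η * |τ|)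
    + 1 / 2 * (σ ^ 2 / κ - κ * ν ^ 2 / (κ ^ 2 - η ^ 2)) * Real.exp (-κ * |τ|)

/-- Causal exponential filter. -/
noncomputable def ouf (a t u : ℝ) : ℝ := if u ≤ t then Real.exp (a * (u - t)) else 0

lemma ouf_mul (a b s t u : ℝ) :
    ouf a s u * ouf b t u =
      (Set.Iic (min s t)).indicator
        (fun v => Real.exp ((a + b) * v) * Real.exp (-(a * s + b * t))) u := by
  unfold ouf
  by_cases h1 : u ≤ s <;> by_cases h2 : u ≤ t
  · rw [Set.indicator_of_mem (by simp [le_min_iff, h1, h2] : u ∈ Set.Iic (min s t)),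
      if_pos h1, if_pos h2, ← Real.exp_add, ← Real.exp_add]
    congr 1; ring
  all_goals
    rw [Set.indicator_of_notMem (by simp [le_min_iff, h1, h2])]
    simp [h1, h2]

lemma indicator_exp_eq (c m : ℝ) (hc : 0 < c) :
    (fun x : ℝ => (Set.Iic (c * m)).indicator Real.exp (c * x))
      = (Set.Iic m).indicator (fun v => Real.exp (c * v)) := by
  funext x
  by_cases hx : x ≤ m
  · have : c * x ≤ c * m := by nlinarith
    simp [Set.indicator_apply, hx, this]
  · have : ¬ c * x ≤ c * m := by
      intro h; exact hx (le_of_mul_le_mul_left h hc)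
    simp [Set.indicator_apply, hx, this]

lemma indicator_exp_integrable (c m : ℝ) (hc : 0 < c) :
    Integrable ((Set.Iic m).indicator (fun v => Real.exp (c * v))) := by
  have h0 : Integrable ((Set.Iic (c * m)).indicator Real.exp) :=
    (integrableOn_exp_Iic (c * m)).integrable_indicator measurableSet_Iic
  rw [← indicator_exp_eq c m hc]
  exact (MeasureTheory.integrable_comp_mul_left_iff
    ((Set.Iic (c * m)).indicator Real.exp) hc.ne').mpr h0

lemma integral_indicator_exp (c m : ℝ) (hc : 0 < c) :
    ∫ u, (Set.Iic m).indicator (fun v => Real.exp (c * v)) u = Real.exp (c * m) / c := by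
  have h2 := MeasureTheory.Measure.integral_comp_mul_left
    ((Set.Iic (c * m)).indicator Real.exp) c
  rw [indicator_exp_eq c m hc] at h2
  rw [h2, MeasureTheory.integral_indicator measurableSet_Iic, integral_exp_Iic,
    abs_of_pos (inv_pos.mpr hc), smul_eq_mul]
  field_simp

lemma ouf_mul_fun_eq (a b s t : ℝ) :
    (fun u => ouf a s u * ouf b t u)
      = fun u => (Set.Iic (min s t)).indicator (fun v => Real.exp ((a + b) * v)) u
          * Real.exp (-(a * s + b * t)) := by
  funext u
  rw [ouf_mul]
  by_cases hu : u ∈ Set.Iic (min s t) <;> simp [Set.indicator_apply, hu]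

lemma ouf_mul_integrable (a b s t : ℝ) (ha : 0 < a) (hb : 0 < b) :
    Integrable (fun u => ouf a s u * ouf b t u) := by
  rw [ouf_mul_fun_eq]
  exact (indicator_exp_integrable (a + b) (min s t) (by linarith)).mul_const _

lemma ouf_integral (a b s t : ℝ) (ha : 0 < a) (hb : 0 < b) :
    ∫ u, ouf a s u * ouf b t u
      = Real.exp (a * (min s t - s) + b * (min s t - t)) / (a + b) := by
  rw [ouf_mul_fun_eq, MeasureTheory.integral_mul_const,
    integral_indicator_exp (a + b) (min s t) (by linarith),
    div_mul_eq_mul_div, ← Real.exp_add]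
  congr 2
  ring

/-- The covariance decomposes as a sum of two Gram kernels. -/
lemma Ccov_decomp (κ η σ ν : ℝ) (hη : 0 < η) (hκη : η < κ) (s t : ℝ) :
    Ccov κ η σ ν (s - t)
      = (∫ u, (σ * ouf κ s u) * (σ * ouf κ t u))
        + ∫ u, (κ * ν / (κ - η) * (ouf η s u - ouf κ s u))
            * (κ * ν / (κ - η) * (ouf η t u - ouf κ t u)) := by
  have hκ : 0 < κ := lt_trans hη hκη
  have Iηη := ouf_mul_integrable η η s t hη hη
  have Iηκ := ouf_mul_integrable η κ s t hη hκ
  have Iκη := ouf_mul_integrable κ η s t hκ hη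
  have Iκκ := ouf_mul_integrable κ κ s t hκ hκ
  set α : ℝ := κ * ν / (κ - η) with hα
  have e1 : (fun u => (σ * ouf κ s u) * (σ * ouf κ t u))
      = fun u => σ ^ 2 * (ouf κ s u * ouf κ t u) := by funext u; ring
  have e2 : (fun u => (α * (ouf η s u - ouf κ s u)) * (α * (ouf η t u - ouf κ t u)))
      = fun u => (α ^ 2 * (ouf η s u * ouf η t u) - α ^ 2 * (ouf η s u * ouf κ t u)
          - α ^ 2 * (ouf κ s u * ouf η t u)) + α ^ 2 * (ouf κ s u * ouf κ t u) := by
    funext u; ring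
  have J1 : Integrable (fun u => α ^ 2 * (ouf η s u * ouf η t u)
      - α ^ 2 * (ouf η s u * ouf κ t u)) := by
    exact (Iηη.const_mul _).sub (Iηκ.const_mul _)
  have J2 : Integrable (fun u => α ^ 2 * (ouf η s u * ouf η t u)
      - α ^ 2 * (ouf η s u * ouf κ t u) - α ^ 2 * (ouf κ s u * ouf η t u)) := by
    exact J1.sub (Iκη.const_mul _)
  rw [e1, e2, MeasureTheory.integral_const_mul,
    MeasureTheory.integral_add J2 (Iκκ.const_mul _),
    MeasureTheory.integral_sub J1 (Iκη.const_mul _),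
    MeasureTheory.integral_sub (Iηη.const_mul _) (Iηκ.const_mul _),
    MeasureTheory.integral_const_mul, MeasureTheory.integral_const_mul,
    MeasureTheory.integral_const_mul, MeasureTheory.integral_const_mul]
  rw [ouf_integral η η s t hη hη, ouf_integral η κ s t hη hκ,
    ouf_integral κ η s t hκ hη, ouf_integral κ κ s t hκ hκ]
  have hη0 : η ≠ 0 := ne_of_gt hη
  have hκ0 : κ ≠ 0 := ne_of_gt hκ
  have hηκ0 : η + κ ≠ 0 := by positivity
  have hκη0 : κ - η ≠ 0 := by intro h; nlinarith
  have hsq : κ ^ 2 - η ^ 2 ≠ 0 := by intro h; nlinarith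
  rcases le_total s t with h | h
  · rw [min_eq_left h]
    have habs : |s - t| = -(s - t) := abs_of_nonpos (by linarith)
    have E1 : Real.exp (-η * |s - t|) = Real.exp (η * (s - t)) := by rw [habs]; congr 1; ring
    have E2 : Real.exp (-κ * |s - t|) = Real.exp (κ * (s - t)) := by rw [habs]; congr 1; ring
    have A1 : η * (s - s) + η * (s - t) = η * (s - t) := by ring
    have A2 : η * (s - s) + κ * (s - t) = κ * (s - t) := by ring
    have A3 : κ * (s - s) + η * (s - t) = η * (s - t) := by ring
    have A4 : κ * (s - s) + κ * (s - t) = κ * (s - t) := by ring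
    rw [Ccov, E1, E2, A1, A2, A3, A4]
    generalize Real.exp (η * (s - t)) = x
    generalize Real.exp (κ * (s - t)) = y
    rw [hα]
    field_simp
    ring
  · rw [min_eq_right h]
    have habs : |s - t| = s - t := abs_of_nonneg (by linarith)
    have E1 : Real.exp (-η * |s - t|) = Real.exp (η * (t - s)) := by rw [habs]; congr 1; ring
    have E2 : Real.exp (-κ * |s - t|) = Real.exp (κ * (t - s)) := by rw [habs]; congr 1; ring
    have A1 : η * (t - s) + η * (t - t) = η * (t - s) := by ring
    have A2 : η * (t - s) + κ * (t - t) = η * (t - s) := by ring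
    have A3 : κ * (t - s) + η * (t - t) = κ * (t - s) := by ring
    have A4 : κ * (t - s) + κ * (t - t) = κ * (t - s) := by ring
    rw [Ccov, E1, E2, A1, A2, A3, A4]
    generalize Real.exp (η * (t - s)) = x
    generalize Real.exp (κ * (t - s)) = y
    rw [hα]
    field_simp
    ring

/-- Gram-type quadratic forms are nonnegative. -/
lemma gram_nonneg {d : ℕ} (g : Fin d → ℝ → ℝ) (x : Fin d → ℝ)
    (hInt : ∀ i j, Integrable (fun u => g i u * g j u)) :
    0 ≤ ∑ i, ∑ j, (x i * x j) * ∫ u, g i u * g j u := by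
  have hInt2 : ∀ i j, Integrable (fun u => (x i * g i u) * (x j * g j u)) := by
    intro i j
    have e : (fun u => (x i * g i u) * (x j * g j u))
        = fun u => (x i * x j) * (g i u * g j u) := by funext u; ring
    rw [e]; exact (hInt i j).const_mul _
  have key : ∑ i, ∑ j, (x i * x j) * ∫ u, g i u * g j u
      = ∫ u, (∑ i, x i * g i u) ^ 2 := by
    have e : ∀ u : ℝ, (∑ i, x i * g i u) ^ 2
        = ∑ i, ∑ j, (x i * g i u) * (x j * g j u) := by
      intro u
      rw [sq, Finset.sum_mul_sum]
    simp_rw [e]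
    rw [MeasureTheory.integral_finset_sum _ (fun i _ =>
      integrable_finset_sum _ (fun j _ => hInt2 i j))]
    refine Finset.sum_congr rfl fun i _ => ?_
    rw [MeasureTheory.integral_finset_sum _ (fun j _ => hInt2 i j)]
    refine Finset.sum_congr rfl fun j _ => ?_
    have e2 : (fun u => (x i * g i u) * (x j * g j u))
        = fun u => (x i * x j) * (g i u * g j u) := by funext u; ring
    rw [e2, MeasureTheory.integral_const_mul]
  rw [key]
  exact integral_nonneg fun u => sq_nonneg _

/-- The stationary covariance function of the nested OU process is a
positive semidefinite function on `ℝ`; in particular the variance `C(0)` is positive. -/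
theorem Ccov_posSemidef
    (κ η σ ν : ℝ) (hη : 0 < η) (hκη : η < κ) (hσ : 0 < σ) (hν : 0 < ν) :
    (∀ (d : ℕ) (t : Fin d → ℝ),
        (Matrix.of fun i j => Ccov κ η σ ν (t i - t j)).PosSemidef)
      ∧ 0 < Ccov κ η σ ν 0 := by
  have hκ : 0 < κ := lt_trans hη hκη
  constructor
  · intro d t
    refine Matrix.PosSemidef.of_dotProduct_mulVec_nonneg ?_ ?_
    · -- Hermitian
      ext i j
      simp only [Matrix.conjTranspose_apply, Matrix.of_apply, star_trivial, Ccov,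
        abs_sub_comm (t j) (t i)]
    · intro x
      have hIntP : ∀ i j : Fin d,
          Integrable (fun u => (σ * ouf κ (t i) u) * (σ * ouf κ (t j) u)) := by
        intro i j
        have e : (fun u => (σ * ouf κ (t i) u) * (σ * ouf κ (t j) u))
            = fun u => (σ * σ) * (ouf κ (t i) u * ouf κ (t j) u) := by funext u; ring
        rw [e]
        exact (ouf_mul_integrable κ κ _ _ hκ hκ).const_mul _
      have hIntQ : ∀ i j : Fin d,
          Integrable (fun u => (κ * ν / (κ - η) * (ouf η (t i) u - ouf κ (t i) u))
            * (κ * ν / (κ - η) * (ouf η (t j) u - ouf κ (t j) u))) := by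
        intro i j
        have e : (fun u => (κ * ν / (κ - η) * (ouf η (t i) u - ouf κ (t i) u))
              * (κ * ν / (κ - η) * (ouf η (t j) u - ouf κ (t j) u)))
            = fun u => (κ * ν / (κ - η)) ^ 2 *
                ((ouf η (t i) u * ouf η (t j) u - ouf η (t i) u * ouf κ (t j) u)
                  - (ouf κ (t i) u * ouf η (t j) u - ouf κ (t i) u * ouf κ (t j) u)) := by
          funext u; ring
        rw [e]
        exact (((ouf_mul_integrable η η _ _ hη hη).sub
            (ouf_mul_integrable η κ _ _ hη hκ)).sub
            ((ouf_mul_integrable κ η _ _ hκ hη).sub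
            (ouf_mul_integrable κ κ _ _ hκ hκ))).const_mul _
      have hform : dotProduct (star x)
            ((Matrix.of fun i j => Ccov κ η σ ν (t i - t j)).mulVec x)
          = (∑ i, ∑ j, (x i * x j) *
              ∫ u, (σ * ouf κ (t i) u) * (σ * ouf κ (t j) u))
            + ∑ i, ∑ j, (x i * x j) *
              ∫ u, (κ * ν / (κ - η) * (ouf η (t i) u - ouf κ (t i) u))
                * (κ * ν / (κ - η) * (ouf η (t j) u - ouf κ (t j) u)) := by
        simp only [dotProduct, Matrix.mulVec, Matrix.of_apply, Pi.star_apply,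
          star_trivial]
        rw [← Finset.sum_add_distrib]
        refine Finset.sum_congr rfl fun i _ => ?_
        rw [← Finset.sum_add_distrib, Finset.mul_sum]
        refine Finset.sum_congr rfl fun j _ => ?_
        rw [Ccov_decomp κ η σ ν hη hκη (t i) (t j)]
        ring
      rw [hform]
      exact add_nonneg
        (gram_nonneg (fun i u => σ * ouf κ (t i) u) x hIntP)
        (gram_nonneg (fun i u => κ * ν / (κ - η) * (ouf η (t i) u - ouf κ (t i) u)) x hIntQ)
  · have hη0 : η ≠ 0 := ne_of_gt hη
    have hκ0 : κ ≠ 0 := ne_of_gt hκ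
    have hsqp : (0:ℝ) < κ ^ 2 - η ^ 2 := by nlinarith
    have hsq : κ ^ 2 - η ^ 2 ≠ 0 := ne_of_gt hsqp
    have h0 : Ccov κ η σ ν 0
        = σ ^ 2 / (2 * κ) + ν ^ 2 * κ * (κ - η) / (2 * (η * (κ ^ 2 - η ^ 2))) := by
      simp only [Ccov, abs_zero, mul_zero, Real.exp_zero, mul_one, neg_zero]
      field_simp
      ring
    rw [h0]
    have h1 : 0 < σ ^ 2 / (2 * κ) := by positivity
    have h2 : 0 < ν ^ 2 * κ * (κ - η) / (2 * (η * (κ ^ 2 - η ^ 2))) := by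
      apply div_pos
      · exact mul_pos (mul_pos (pow_pos hν 2) hκ) (sub_pos.mpr hκη)
      · exact mul_pos two_pos (mul_pos hη hsqp)
    linarith
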